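/- The small-z asymptotic solution of 2z = (1 + θz)² − (1 + (1-θ)z)^{-2} has leading coefficients θ' = (3 − √3)/2 and θ'' = (−9 + 5√3)/6; that is, substituting θ(z) = θ' + θ'' z into F(θ,z) := (1 + θz)² − (1 + (1-θ)z)^{-2} − 2z yields F = O(z³) as z → 0. -/
import Mathlib

noncomputable def sqQ (z : ℝ) : ℝ :=
  (187/12 - 9 * Real.sqrt 3) + (-317/6 + 61/2 * Real.sqrt 3) * z +
    (265/3 - 51 * Real.sqrt 3) * z^2 + (-571/6 + 989/18 * Real.sqrt 3) * z^3 +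
    (1351/36 - 65/3 * Real.sqrt 3) * z^4

noncomputable def sqB (z : ℝ) : ℝ :=
  (1 + (1 - ((3 - Real.sqrt 3) / 2 + (-9 + 5 * Real.sqrt 3) / 6 * z)) * z) ^ 2

lemma sq_key (z : ℝ) :
    ((1 + ((3 - Real.sqrt 3) / 2 + (-9 + 5 * Real.sqrt 3) / 6 * z) * z) ^ 2 - 2 * z) * sqB z - 1
      = z ^ 4 * sqQ z := by
  have hs : Real.sqrt 3 ^ 2 = 3 := Real.sq_sqrt (by norm_num)
  set s := Real.sqrt 3
  unfold sqB sqQ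
  linear_combination (-(1/2)*z^2 + (2/3)*z^3 + (505/144)*z^4 - (1/2)*z^4*s + (1/16)*z^4*s^2
    - (118/9)*z^5 + (13/4)*z^5*s - (5/12)*z^5*s^2 + (1823/72)*z^6 - (95/12)*z^6*s
    + (25/24)*z^6*s^2 - (245/9)*z^7 + (925/108)*z^7*s - (125/108)*z^7*s^2
    + (4675/432)*z^8 - (125/36)*z^8*s + (625/1296)*z^8*s^2) * hs

theorem stmt_9 :
    (fun z : ℝ =>
        (1 + ((3 - Real.sqrt 3) / 2 + (-9 + 5 * Real.sqrt 3) / 6 * z) * z) ^ 2 -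
          ((1 + (1 - ((3 - Real.sqrt 3) / 2 + (-9 + 5 * Real.sqrt 3) / 6 * z)) * z) ^ 2)⁻¹ -
          2 * z)
      =O[nhdsWithin 0 (Set.Ioi 0)] (fun z : ℝ => z ^ 3) := by
  have hBcont : ContinuousAt sqB 0 := by
    unfold sqB; fun_prop
  have hB0 : sqB 0 = 1 := by simp [sqB]
  have hBne : ∀ᶠ z in nhdsWithin 0 (Set.Ioi 0), sqB z ≠ 0 := by
    have : Filter.Tendsto sqB (nhdsWithin 0 (Set.Ioi 0)) (nhds 1) := by
      rw [← hB0]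
      exact (hBcont.continuousWithinAt).tendsto
    exact this.eventually_ne one_ne_zero
  have hh : Filter.Tendsto (fun z => z * sqQ z / sqB z) (nhdsWithin 0 (Set.Ioi 0)) (nhds 0) := by
    have hc : ContinuousAt (fun z => z * sqQ z / sqB z) 0 := by
      apply ContinuousAt.div
      · unfold sqQ; fun_prop
      · exact hBcont
      · rw [hB0]; exact one_ne_zero
    have := hc.tendsto.mono_left (nhdsWithin_le_nhds (s := Set.Ioi 0))
    simpa using this
  have hO1 : (fun z => z * sqQ z / sqB z) =O[nhdsWithin 0 (Set.Ioi 0)] (fun _ : ℝ => (1:ℝ)) :=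
    hh.isBigO_one ℝ
  have hO : (fun z => (z * sqQ z / sqB z) * z ^ 3) =O[nhdsWithin 0 (Set.Ioi 0)]
      (fun z : ℝ => z ^ 3) := by
    simpa using hO1.mul (Asymptotics.isBigO_refl (fun z : ℝ => z ^ 3) _)
  refine hO.congr' ?_ Filter.EventuallyEq.rfl
  filter_upwards [hBne] with z hz
  have key := sq_key z
  have hBinv : (sqB z)⁻¹ * sqB z = 1 := inv_mul_cancel₀ hz
  rw [show (1 + (1 - ((3 - Real.sqrt 3) / 2 + (-9 + 5 * Real.sqrt 3) / 6 * z)) * z) ^ 2 = sqB z from rfl,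
    div_mul_eq_mul_div, div_eq_iff hz]
  linear_combination hBinv - key
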